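/- Let X ∈ ℝ^{n×p} have full row rank with n < p, let P = Xᵀ(XXᵀ)^{-1}X, let β ∈ ℝᵖ, let F ∈ ℝ^{p×n}, and set z = β − F X β. Let x* : Ω → ℝᵖ be a square-integrable random vector with E(x*) = 0 and E(x* x*ᵀ) = I_p. With h(x) = (XXᵀ)^{-1}Xx and h^{(∞)}(x) = h(x) + Fᵀ(I_p − P)x, the excess biases satisfy E[(x*ᵀβ − h^{(∞)}(x*)ᵀ X β)²] = E[(x*ᵀβ − h(x*)ᵀ X β)²] − ‖(I_p − P)β‖² + ‖(I_p − P)z‖². In particular, E[(x*ᵀβ − h(x*)ᵀ Xβ)²] = ‖(I_p − P)β‖² and E[(x*ᵀβ − h^{(∞)}(x*)ᵀ Xβ)²] = ‖(I_p − P)z‖². -/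

import Mathlib

open Matrix MeasureTheory

/-- Excess bias of the gradient-descent interpolant with initialization
`β^{(0)} = Fy` versus that of the minimum-norm least squares model, for a linear true
mean `μ(x) = xᵀβ` and isotropic test features (`E x* = 0`, `E x*x*ᵀ = I_p`):
`E[(x*ᵀβ − h^{(∞)}(x*)ᵀXβ)²] = E[(x*ᵀβ − h(x*)ᵀXβ)²] − ‖(I−P)β‖² + ‖(I−P)z‖²`,
with `E[(x*ᵀβ − h(x*)ᵀXβ)²] = ‖(I−P)β‖²` and
`E[(x*ᵀβ − h^{(∞)}(x*)ᵀXβ)²] = ‖(I−P)z‖²`, where `z = β − FXβ`. -/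
theorem excess_bias_gradient_descent_interpolant
    {Ω : Type*} [MeasurableSpace Ω] (P' : Measure Ω) [IsProbabilityMeasure P']
    {n p : ℕ} (hnp : n < p)
    (X : Matrix (Fin n) (Fin p) ℝ) (hX : X.rank = n)
    (P : Matrix (Fin p) (Fin p) ℝ) (hP : P = Xᵀ * (X * Xᵀ)⁻¹ * X)
    (β : Fin p → ℝ)
    (F : Matrix (Fin p) (Fin n) ℝ)
    (z : Fin p → ℝ) (hz : z = β - F *ᵥ (X *ᵥ β))
    (xstar : Ω → Fin p → ℝ) (hxmeas : Measurable xstar)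
    (hxL2 : ∀ i, MemLp (fun ω => xstar ω i) 2 P')
    (hxmean : ∀ i, ∫ ω, xstar ω i ∂P' = 0)
    (hxmom : ∀ i j, ∫ ω, xstar ω i * xstar ω j ∂P' =
      (1 : Matrix (Fin p) (Fin p) ℝ) i j)
    (h hinf : (Fin p → ℝ) → Fin n → ℝ)
    (hh : ∀ x, h x = (X * Xᵀ)⁻¹ *ᵥ (X *ᵥ x))
    (hhinf : ∀ x, hinf x = h x + (Fᵀ * (1 - P)) *ᵥ x) :
    (∫ ω, (xstar ω ⬝ᵥ β - hinf (xstar ω) ⬝ᵥ (X *ᵥ β)) ^ 2 ∂P' =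
        (∫ ω, (xstar ω ⬝ᵥ β - h (xstar ω) ⬝ᵥ (X *ᵥ β)) ^ 2 ∂P') -
          (∑ i, (((1 - P) *ᵥ β) i) ^ 2) + ∑ i, (((1 - P) *ᵥ z) i) ^ 2) ∧
      (∫ ω, (xstar ω ⬝ᵥ β - h (xstar ω) ⬝ᵥ (X *ᵥ β)) ^ 2 ∂P' =
        ∑ i, (((1 - P) *ᵥ β) i) ^ 2) ∧
      (∫ ω, (xstar ω ⬝ᵥ β - hinf (xstar ω) ⬝ᵥ (X *ᵥ β)) ^ 2 ∂P' =
        ∑ i, (((1 - P) *ᵥ z) i) ^ 2) := by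
  have dp : ∀ {a b : ℕ} (A : Matrix (Fin a) (Fin b) ℝ) (x : Fin b → ℝ)
      (y : Fin a → ℝ), (A *ᵥ x) ⬝ᵥ y = x ⬝ᵥ (Aᵀ *ᵥ y) := by
    intro a b A x y
    rw [dotProduct_comm, Matrix.dotProduct_mulVec, ← Matrix.mulVec_transpose,
      dotProduct_comm]
  -- symmetry of P
  have hPt : Pᵀ = P := by
    rw [hP]
    simp [Matrix.transpose_mul, Matrix.transpose_nonsing_inv, Matrix.mul_assoc]
  -- key integral identity
  have key : ∀ v : Fin p → ℝ, ∫ ω, (xstar ω ⬝ᵥ v) ^ 2 ∂P' = ∑ i, (v i) ^ 2 := by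
    intro v
    have hint : ∀ i j : Fin p, Integrable (fun ω => xstar ω i * xstar ω j) P' := by
      intro i j
      have := ((((hxL2 i).add (hxL2 j)).integrable_sq.sub
        (hxL2 i).integrable_sq).sub (hxL2 j).integrable_sq).div_const 2
      refine this.congr (Filter.Eventually.of_forall fun ω => ?_)
      simp only [Pi.add_apply, Pi.sub_apply]
      ring
    have e1 : ∀ ω, (xstar ω ⬝ᵥ v) ^ 2
        = ∑ i, ∑ j, (v i * v j) * (xstar ω i * xstar ω j) := by
      intro ω
      rw [sq, dotProduct, Finset.sum_mul_sum]
      exact Finset.sum_congr rfl fun i _ => Finset.sum_congr rfl fun j _ => by ring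
    simp_rw [e1]
    rw [integral_finset_sum _ (fun i _ =>
      integrable_finset_sum _ (fun j _ => ((hint i j).const_mul _)))]
    have : ∀ i, ∫ ω, ∑ j, (v i * v j) * (xstar ω i * xstar ω j) ∂P'
        = ∑ j, (v i * v j) * ((1 : Matrix (Fin p) (Fin p) ℝ) i j) := by
      intro i
      rw [integral_finset_sum _ (fun j _ => (hint i j).const_mul _)]
      exact Finset.sum_congr rfl fun j _ => by
        rw [integral_const_mul, hxmom]
    simp_rw [this, Matrix.one_apply, mul_ite, mul_one, mul_zero,
      Finset.sum_ite_eq, Finset.mem_univ, if_true]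
    exact Finset.sum_congr rfl fun i _ => by ring
  -- residual representations
  have hres : ∀ x : Fin p → ℝ, x ⬝ᵥ β - h x ⬝ᵥ (X *ᵥ β) = x ⬝ᵥ ((1 - P) *ᵥ β) := by
    intro x
    have : h x ⬝ᵥ (X *ᵥ β) = x ⬝ᵥ (P *ᵥ β) := by
      rw [hh, hP, Matrix.mulVec_mulVec, dp, Matrix.mulVec_mulVec]
      congr 2
      rw [Matrix.transpose_mul, Matrix.transpose_nonsing_inv]
      simp [Matrix.transpose_mul, Matrix.mul_assoc]
    rw [this, Matrix.sub_mulVec, dotProduct_sub, Matrix.one_mulVec]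
  have hresinf : ∀ x : Fin p → ℝ,
      x ⬝ᵥ β - hinf x ⬝ᵥ (X *ᵥ β) = x ⬝ᵥ ((1 - P) *ᵥ z) := by
    intro x
    rw [hhinf, add_dotProduct]
    have e2 : ((Fᵀ * (1 - P)) *ᵥ x) ⬝ᵥ (X *ᵥ β)
        = x ⬝ᵥ ((1 - P) *ᵥ (F *ᵥ (X *ᵥ β))) := by
      rw [dp, Matrix.transpose_mul, Matrix.transpose_transpose,
        Matrix.transpose_sub, Matrix.transpose_one, hPt, ← Matrix.mulVec_mulVec]
    rw [e2]
    have := hres x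
    rw [hz, Matrix.mulVec_sub, dotProduct_sub]
    ring_nf
    ring_nf at this
    linarith [this]
  simp_rw [hres, hresinf, key]
  exact ⟨by ring, trivial, trivial⟩
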